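/- Let p be a prime number and let a, b, c be positive rational numbers satisfying a² = p(b² + c²). Then the field ℚ(√(a + b√p)) is a Galois extension of ℚ of degree 4 whose Galois group is cyclic (of order 4). -/

import Mathlib

open Polynomial IntermediateField

private lemma aux_not_rat_sq (p : ℕ) (hp : p.Prime) (d e : ℚ) (he : e ≠ 0)
    (h : d ^ 2 = (p : ℚ) * e ^ 2) : False := by
  have h2 : ((d / e : ℚ) : ℝ) ^ 2 = (p : ℝ) := by
    push_cast
    field_simp
    exact_mod_cast h.trans (mul_comm _ _)
  apply hp.irrational_sqrt
  refine ⟨|d / e|, ?_⟩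
  rw [← h2, Real.sqrt_sq_eq_abs]
  push_cast
  ring


set_option maxHeartbeats 1600000 in
set_option synthInstance.maxHeartbeats 400000 in
/-- If `p` is prime and `a, b, c` are positive rationals with
`a² = p (b² + c²)`, then `ℚ(√(a + b √p))` is a Galois extension of `ℚ` of
degree `4` with cyclic Galois group. -/
theorem adjoin_sqrt_add_sqrt_cyclic_degree_four (p : ℕ) (hp : p.Prime) (a b c : ℚ)
    (ha : 0 < a) (hb : 0 < b) (hc : 0 < c)
    (habc : a ^ 2 = (p : ℚ) * (b ^ 2 + c ^ 2)) :
    letI E : IntermediateField ℚ ℝ :=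
      IntermediateField.adjoin ℚ {Real.sqrt ((a : ℝ) + (b : ℝ) * Real.sqrt (p : ℝ))}
    IsGalois ℚ E ∧ Module.finrank ℚ E = 4 ∧ IsCyclic (E ≃ₐ[ℚ] E) := by
  set s := Real.sqrt (p : ℝ) with hs_def
  have hppos : (0:ℝ) < p := by exact_mod_cast hp.pos
  have hspos : 0 < s := Real.sqrt_pos.mpr hppos
  have hsp : s ^ 2 = (p : ℝ) := Real.sq_sqrt hppos.le
  have habcR : (a:ℝ) ^ 2 = (p:ℝ) * ((b:ℝ) ^ 2 + (c:ℝ) ^ 2) := by exact_mod_cast habc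
  have haR : (0:ℝ) < a := by exact_mod_cast ha
  have hbR : (0:ℝ) < b := by exact_mod_cast hb
  have hcR : (0:ℝ) < c := by exact_mod_cast hc
  have hsq_lt : ((b:ℝ) * s) ^ 2 < (a:ℝ) ^ 2 := by
    nlinarith [hsp, habcR, mul_pos (mul_pos hppos hcR) hcR]
  have hbs_lt : (b:ℝ) * s < a := by nlinarith [hsq_lt, mul_pos hbR hspos, haR]
  have hpos1 : (0:ℝ) < (a:ℝ) + b * s := by positivity
  have hpos2 : (0:ℝ) < (a:ℝ) - b * s := by linarith
  set θ := Real.sqrt ((a:ℝ) + b * s) with hθ_def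
  set θ' := Real.sqrt ((a:ℝ) - b * s) with hθ'_def
  have hθpos : 0 < θ := Real.sqrt_pos.mpr hpos1
  have hθ'pos : 0 < θ' := Real.sqrt_pos.mpr hpos2
  have hθsq : θ ^ 2 = (a:ℝ) + b * s := Real.sq_sqrt hpos1.le
  have hθ'sq : θ' ^ 2 = (a:ℝ) - b * s := Real.sq_sqrt hpos2.le
  have hmul : θ * θ' = (c:ℝ) * s := by
    rw [hθ_def, hθ'_def, ← Real.sqrt_mul hpos1.le]
    have : ((a:ℝ) + b * s) * ((a:ℝ) - b * s) = ((c:ℝ) * s) ^ 2 := by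
      nlinarith [hsp]
    rw [this, Real.sqrt_sq (by positivity)]
  set f : ℚ[X] := X ^ 4 - C (2 * a) * X ^ 2 + C ((p:ℚ) * c ^ 2) with hf_def
  have hfmonic : f.Monic := by rw [hf_def]; monicity!
  have hfdeg : f.natDegree = 4 := by rw [hf_def]; compute_degree!
  have hfθ : (aeval θ) f = 0 := by
    simp only [hf_def, map_add, map_sub, map_mul, map_pow, aeval_X, aeval_C, eq_ratCast,
      Rat.cast_mul, Rat.cast_ofNat, Rat.cast_natCast, Rat.cast_pow]
    linear_combination (θ^2 - (a:ℝ) + (b:ℝ)*s) * hθsq + (b:ℝ)^2 * hsp - habcR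
  have hfθ' : (aeval θ') f = 0 := by
    simp only [hf_def, map_add, map_sub, map_mul, map_pow, aeval_X, aeval_C, eq_ratCast,
      Rat.cast_mul, Rat.cast_ofNat, Rat.cast_natCast, Rat.cast_pow]
    linear_combination (θ'^2 - (a:ℝ) - (b:ℝ)*s) * hθ'sq + (b:ℝ)^2 * hsp - habcR
  have hθint : IsIntegral ℚ θ := ⟨f, hfmonic, by rwa [← aeval_def]⟩
  have hratroot : ∀ r : ℚ, r ^ 4 - 2*a*r^2 + (p:ℚ)*c^2 = 0 → False := by
    intro r hr
    have hkey : (r^2 - a)^2 = (p:ℚ) * b^2 := by linear_combination hr + habc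
    exact aux_not_rat_sq p hp _ b hb.ne' hkey
  have hsirr : Irrational s := hp.irrational_sqrt
  set g := minpoly ℚ θ with hg_def
  have hgmon : g.Monic := minpoly.monic hθint
  have haevalg : aeval θ g = 0 := minpoly.aeval ℚ θ
  obtain ⟨h, hfgh⟩ : g ∣ f := minpoly.dvd ℚ θ hfθ
  have hgne : g ≠ 0 := minpoly.ne_zero hθint
  have hhmon : h.Monic := hgmon.of_mul_monic_left (by rwa [← hfgh])
  have hdegsum : g.natDegree + h.natDegree = 4 := by
    rw [← natDegree_mul hgne hhmon.ne_zero, ← hfgh, hfdeg]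
  have hgpos : 0 < g.natDegree := minpoly.natDegree_pos hθint
  have hgdeg : g.natDegree = 4 := by
    have hcases : g.natDegree = 1 ∨ g.natDegree = 2 ∨ g.natDegree = 3 ∨ g.natDegree = 4 := by
      omega
    rcases hcases with h1 | h2 | h3 | h4
    · -- degree 1 : θ rational
      exfalso
      have hc1 : g.coeff 1 = 1 := by have := hgmon.coeff_natDegree; rwa [h1] at this
      have hrepr := eq_X_add_C_of_natDegree_le_one (le_of_eq h1)
      rw [hc1, map_one, one_mul] at hrepr
      have hθr : θ = ((-g.coeff 0 : ℚ) : ℝ) := by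
        have h0 := haevalg
        rw [hrepr] at h0
        simp only [map_add, aeval_X, aeval_C, eq_ratCast] at h0
        push_cast
        linarith
      apply hratroot (-g.coeff 0)
      have h0 := hfθ
      rw [hθr] at h0
      simp only [hf_def, map_add, map_sub, map_mul, map_pow, aeval_X, aeval_C,
        eq_ratCast] at h0
      exact_mod_cast h0
    · -- degree 2
      exfalso
      have hc2 : g.coeff 2 = 1 := by have := hgmon.coeff_natDegree; rwa [h2] at this
      have hsum := Polynomial.aeval_eq_sum_range (p := g) θ
      rw [h2] at hsum
      rw [Finset.sum_range_succ, Finset.sum_range_succ, Finset.sum_range_succ,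
        Finset.sum_range_zero, hc2] at hsum
      rw [haevalg] at hsum
      set u := g.coeff 1 with hu_def
      set v := g.coeff 0 with hv_def
      have hquad : θ^2 + (u:ℝ) * θ + (v:ℝ) = 0 := by
        simp only [Rat.smul_def, one_mul, zero_add, pow_zero, pow_one, mul_one] at hsum
        push_cast at hsum ⊢
        linarith
      by_cases hu : u = 0
      · rw [hu] at hquad
        apply hsirr
        refine ⟨-(a+v)/b, ?_⟩
        push_cast
        rw [div_eq_iff (by exact_mod_cast hb.ne')]
        push_cast at hquad
        linarith [hθsq, hquad]
      · set x : ℚ := -(a+v)/u with hx_def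
        set y : ℚ := -b/u with hy_def
        have hθxy : θ = (x:ℝ) + (y:ℝ) * s := by
          have huR : (u:ℝ) ≠ 0 := by exact_mod_cast hu
          rw [hx_def, hy_def]
          push_cast
          field_simp
          linear_combination hquad - hθsq
        have hsq2 : ((x:ℝ) + (y:ℝ)*s)^2 = (a:ℝ) + (b:ℝ)*s := by rw [← hθxy]; exact hθsq
        have hexp : ((x^2 + p*y^2 - a : ℚ) : ℝ) + ((2*x*y - b : ℚ):ℝ) * s = 0 := by
          push_cast
          linear_combination hsq2 - (y:ℝ)^2 * hsp
        have hy' : 2*x*y - b = 0 := by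
          by_contra hyne
          apply hsirr
          refine ⟨-(x^2 + p*y^2 - a)/(2*x*y - b), ?_⟩
          push_cast
          rw [div_eq_iff (by have hyneR : ((2*x*y - b : ℚ):ℝ) ≠ 0 := Rat.cast_ne_zero.mpr hyne; push_cast at hyneR; exact hyneR)]
          push_cast at hexp
          linarith
        have hx' : x^2 + p*y^2 - a = 0 := by
          have : ((x^2 + p*y^2 - a : ℚ) : ℝ) = 0 := by
            rw [hy'] at hexp; push_cast at hexp ⊢; linarith
          exact_mod_cast this
        exact aux_not_rat_sq p hp (x^2 - p*y^2) c hc.ne'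
          (by linear_combination (x^2+p*y^2+a)*hx' - (p:ℚ)*(2*x*y+b)*hy' + habc)
    · -- degree 3 : h gives rational root
      exfalso
      have hh1 : h.natDegree = 1 := by omega
      have hc1 : h.coeff 1 = 1 := by have := hhmon.coeff_natDegree; rwa [hh1] at this
      have hrepr := eq_X_add_C_of_natDegree_le_one (le_of_eq hh1)
      rw [hc1, map_one, one_mul] at hrepr
      apply hratroot (-h.coeff 0)
      have heval : f.eval (-h.coeff 0) = 0 := by
        rw [hfgh, eval_mul, hrepr]; simp
      rw [hf_def] at heval
      simp only [eval_add, eval_sub, eval_mul, eval_pow, eval_X, eval_C] at heval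
      linear_combination heval
    · exact h4
  have hmin : g = f := by
    have hh0 : h.natDegree = 0 := by omega
    rw [hhmon.natDegree_eq_zero] at hh0
    rw [hfgh, hh0, mul_one]
  set E₀ := IntermediateField.adjoin ℚ {θ} with hE₀
  have hθmem : θ ∈ E₀ := IntermediateField.mem_adjoin_simple_self ℚ θ
  have hamem : ∀ q : ℚ, (q:ℝ) ∈ E₀ := fun q => by
    simpa using E₀.algebraMap_mem q
  have hsmem : s ∈ E₀ := by
    have hrepr : s = ((θ^2 - (a:ℝ)) / (b:ℝ)) := by
      rw [hθsq]; field_simp; ring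
    rw [hrepr]
    exact E₀.div_mem (E₀.sub_mem (E₀.pow_mem hθmem 2) (hamem a)) (hamem b)
  have hθ'mem : θ' ∈ E₀ := by
    have hrepr : θ' = (c:ℝ) * s / θ := by
      field_simp
      linear_combination hmul
    rw [hrepr]
    exact E₀.div_mem (E₀.mul_mem (hamem c) hsmem) hθmem
  set tE : E₀ := ⟨θ, hθmem⟩ with htE_def
  set sE : E₀ := ⟨s, hsmem⟩ with hsE_def
  set t'E : E₀ := ⟨θ', hθ'mem⟩ with ht'E_def
  have e1 : ((b:ℚ) : E₀) * sE = tE^2 - ((a:ℚ) : E₀) := by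
    apply Subtype.ext
    push_cast
    linear_combination -hθsq
  have e2 : t'E^2 = ((a:ℚ) : E₀) - ((b:ℚ) : E₀) * sE := by
    apply Subtype.ext
    push_cast
    linear_combination hθ'sq
  have e3 : tE * t'E = ((c:ℚ) : E₀) * sE := by
    apply Subtype.ext
    push_cast
    linear_combination hmul
  have haevalE : ∀ zE : E₀, aeval ((zE : ℝ)) f = 0 → aeval zE f = 0 := by
    intro zE hz
    rw [IntermediateField.aeval_coe] at hz
    exact_mod_cast hz
  have htroot : aeval tE f = 0 := haevalE tE hfθ
  have ht'root : aeval t'E f = 0 := haevalE t'E hfθ'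
  have hmapf : f.map (algebraMap ℚ E₀) =
      X^4 - C ((2*a : ℚ) : E₀) * X^2 + C (((p:ℚ)*c^2 : ℚ) : E₀) := by
    simp [hf_def, Polynomial.map_add, Polynomial.map_sub, Polynomial.map_mul,
      Polynomial.map_pow, map_C, map_X, eq_ratCast]
  have e1' : tE^2 = ((a:ℚ):E₀) + ((b:ℚ):E₀) * sE := by
    apply Subtype.ext; push_cast; exact hθsq
  have e5 : sE^2 = ((p:ℚ):E₀) := by
    apply Subtype.ext; push_cast; exact hsp
  have h1C : ((2*a : ℚ) : E₀) = tE^2 + t'E^2 := by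
    rw [e1', e2]
    push_cast
    ring
  have h2C : (((p:ℚ)*c^2 : ℚ) : E₀) = tE^2 * t'E^2 := by
    have e4 : tE^2 * t'E^2 = (tE*t'E)^2 := by ring
    rw [e4, e3, mul_pow, e5]
    push_cast
    ring
  have hsplitmap : f.map (algebraMap ℚ E₀) =
      (X - C tE) * (X + C tE) * (X - C t'E) * (X + C t'E) := by
    rw [hmapf, h1C, h2C]
    simp only [C_add, C_mul, C_pow]
    ring
  have hsplits : (f.map (algebraMap ℚ E₀)).Splits := by
    rw [hsplitmap]
    have hx : ∀ z : (E₀ : IntermediateField ℚ ℝ), (X + C z).Splits := fun z =>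
      Polynomial.Splits.X_add_C z
    exact Polynomial.Splits.mul (Polynomial.Splits.mul (Polynomial.Splits.mul
      (Polynomial.Splits.X_sub_C _) (hx tE)) (Polynomial.Splits.X_sub_C _)) (hx t'E)
  have htE_root : tE ∈ f.rootSet E₀ := by
    rw [Polynomial.mem_rootSet]
    exact ⟨hfmonic.ne_zero, htroot⟩
  have hadj_top : Algebra.adjoin ℚ (f.rootSet E₀) = ⊤ := by
    rw [eq_top_iff]
    have hgen : Algebra.adjoin ℚ {tE} = ⊤ := by
      apply Subalgebra.map_injective (f := E₀.val) Subtype.val_injective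
      erw [AlgHom.map_adjoin, Algebra.map_top]; rw [IntermediateField.range_val,
        Set.image_singleton]
      show Algebra.adjoin ℚ {θ} = E₀.toSubalgebra
      exact (IntermediateField.adjoin_simple_toSubalgebra_of_isAlgebraic hθint.isAlgebraic).symm
    rw [← hgen]
    exact Algebra.adjoin_mono (Set.singleton_subset_iff.mpr htE_root)
  haveI hFD : FiniteDimensional ℚ E₀ := IntermediateField.adjoin.finiteDimensional hθint
  haveI hSplF : Polynomial.IsSplittingField ℚ E₀ f := ⟨hsplits, hadj_top⟩
  haveI hNormal : Normal ℚ E₀ := Normal.of_isSplittingField f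
  haveI hGal : IsGalois ℚ E₀ := ⟨⟩
  have hrank : Module.finrank ℚ E₀ = 4 := by
    rw [IntermediateField.adjoin.finrank hθint, ← hg_def, hmin, hfdeg]
  haveI : Fact (Nat.Prime 2) := ⟨Nat.prime_two⟩
  have hcard : Fintype.card (E₀ ≃ₐ[ℚ] E₀) = 4 := by
    rw [← Nat.card_eq_fintype_card, IsGalois.card_aut_eq_finrank, hrank]
  set pb := IntermediateField.adjoin.powerBasis hθint with hpb_def
  have hgen : pb.gen = tE := rfl
  have hroot' : aeval t'E (minpoly ℚ pb.gen) = 0 := by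
    rw [hgen, show minpoly ℚ tE = minpoly ℚ θ from IntermediateField.minpoly_gen ℚ θ,
      ← hg_def, hmin]
    exact ht'root
  set φ := pb.lift t'E hroot' with hφ_def
  haveI : Algebra.IsAlgebraic ℚ E₀ := Algebra.IsAlgebraic.of_finite ℚ E₀
  set σ : E₀ ≃ₐ[ℚ] E₀ := AlgEquiv.ofBijective φ (Algebra.IsAlgebraic.algHom_bijective φ)
    with hσ_def
  have hσt : σ tE = t'E := by
    show φ tE = t'E
    rw [← hgen]
    exact pb.lift_gen t'E hroot'
  have hbE : ((b:ℚ) : E₀) ≠ 0 := by exact_mod_cast hb.ne'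
  have ht'ne : t'E ≠ 0 := fun hz => hθ'pos.ne' (congrArg Subtype.val hz)
  have hσs : σ sE = -sE := by
    have h1 := congrArg σ e1
    simp only [map_mul, map_sub, map_pow, map_ratCast, hσt] at h1
    rw [e2] at h1
    apply mul_left_cancel₀ hbE
    rw [h1]; ring
  have hσt' : σ t'E = -tE := by
    have h3 := congrArg σ e3
    simp only [map_mul, map_ratCast, hσt, hσs] at h3
    apply mul_left_cancel₀ ht'ne
    rw [h3]
    linear_combination e3
  have hσσ : (σ * σ) tE = -tE := by rw [AlgEquiv.mul_apply, hσt, hσt']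
  have hσ2ne : ¬ σ ^ (2:ℕ) ^ 1 = 1 := by
    intro hone
    rw [pow_one, pow_two] at hone
    have happ : (σ * σ) tE = tE := by rw [hone]; rfl
    rw [hσσ] at happ
    have hval := congrArg Subtype.val happ
    push_cast at hval
    have hth : -θ = θ := hval
    linarith
  have hord : orderOf σ = 4 := by
    have h4 : σ ^ (2:ℕ) ^ 2 = 1 := by
      have hpc : σ ^ Fintype.card (E₀ ≃ₐ[ℚ] E₀) = 1 := pow_card_eq_one
      rw [hcard] at hpc
      rw [show (2:ℕ)^2 = 4 from rfl]
      exact hpc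
    have hthis := orderOf_eq_prime_pow hσ2ne h4
    rwa [show (2:ℕ)^2 = 4 from rfl] at hthis
  have hcyc : IsCyclic (E₀ ≃ₐ[ℚ] E₀) :=
    isCyclic_of_orderOf_eq_card σ (by rw [hord, Nat.card_eq_fintype_card, hcard])
  exact ⟨hGal, hrank, hcyc⟩
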